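/- arXiv:1402.4147 — 2 statements merged into one kernel-verified Lean document; each statement's English description precedes it below -/
import Mathlib

section
/- Suppose $\mathbf{W}_n^* := \sum_{|v|<n} L(v)\mathbf{C}(v)$ converges in probability to a finite random vector $\mathbf{W}^*$ as $n \to \infty$. Then $\mathbf{W}^*$ satisfies almost surely $\mathbf{W}^* = \sum_{j=1}^N T_j [\mathbf{W}^*]_j + \mathbf{C}$, where $[\mathbf{W}^*]_j$ is the analogous limit for the weighted branching process rooted at the $j$-th child of the root; in particular the distribution of $\mathbf{W}^*$ is a fixed point of the inhomogeneous smoothing transform. -/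
open MeasureTheory ProbabilityTheory Filter

/-- The weight `L(v)` of a vertex of the Ulam–Harris tree in the weighted branching process. -/
noncomputable def wbpWeight {Ω : Type*} (Tv : List ℕ → ℕ → Ω → ℝ) (v : List ℕ) (ω : Ω) : ℝ :=
  ∏ k ∈ Finset.range v.length, Tv (v.take k) (v.getD k 0) ω

lemma wbpWeight_nil {Ω : Type*} (T : List ℕ → ℕ → Ω → ℝ) (ω : Ω) : wbpWeight T ([]) ω = 1 := by
  simp [wbpWeight]

lemma wbpWeight_cons {Ω : Type*} (T : List ℕ → ℕ → Ω → ℝ) (j : ℕ) (w : List ℕ) (ω : Ω) :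
    wbpWeight T (j :: w) ω = T ([]) j ω * wbpWeight (fun v k => T (j :: v) k) w ω := by
  have : wbpWeight T (j :: w) ω
      = ∏ k ∈ Finset.range (w.length + 1), T ((j :: w).take k) ((j :: w).getD k 0) ω := rfl
  rw [this, Finset.prod_range_succ', mul_comm]
  congr 1

lemma wbpWeight_support_finite {Ω : Type*} (ω : Ω) :
    ∀ (n : ℕ) (T : List ℕ → ℕ → Ω → ℝ), (∀ v, {j | T v j ω ≠ 0}.Finite) →
      {l : List ℕ | l.length < n ∧ wbpWeight T l ω ≠ 0}.Finite := by
  intro n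
  induction n with
  | zero => intro T hT; convert Set.finite_empty; ext l; simp
  | succ n ih =>
    intro T hT
    have hsub : {l : List ℕ | l.length < n + 1 ∧ wbpWeight T l ω ≠ 0} ⊆
        insert [] (⋃ j ∈ {j | T ([]) j ω ≠ 0},
          (j :: ·) '' {w : List ℕ | w.length < n ∧ wbpWeight (fun v k => T (j :: v) k) w ω ≠ 0}) := by
      rintro (_ | ⟨j, w⟩) ⟨hlen, hne⟩
      · exact Set.mem_insert _ _
      · refine Set.mem_insert_iff.2 (Or.inr ?_)
        rw [wbpWeight_cons] at hne
        refine Set.mem_biUnion (show T ([]) j ω ≠ 0 from fun h => hne (by simp [h])) ?_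
        exact ⟨w, ⟨Nat.lt_of_succ_lt_succ hlen, fun h => hne (by simp [h])⟩, rfl⟩
    exact Set.Finite.subset
      ((Set.Finite.biUnion (hT ([])) fun j _ =>
        (ih (fun v k => T (j :: v) k) (fun v => hT (j :: v))).image _).insert [])
      hsub

def consEquiv (n : ℕ) : {l : List ℕ // l.length < n + 1} ≃ Option (ℕ × {l : List ℕ // l.length < n}) where
  toFun v := match v with
    | ⟨[], _⟩ => none
    | ⟨j :: w, h⟩ => some (j, ⟨w, Nat.lt_of_succ_lt_succ h⟩)
  invFun o := match o with
    | none => ⟨[], n.succ_pos⟩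
    | some (j, w) => ⟨j :: w.1, Nat.succ_lt_succ w.2⟩
  left_inv v := by rcases v with ⟨_ | ⟨j, w⟩, h⟩ <;> rfl
  right_inv o := by rcases o with _ | ⟨j, w⟩ <;> rfl

lemma wbp_decomp {Ω : Type*} (d : ℕ) (T : List ℕ → ℕ → Ω → ℝ) (C : List ℕ → Ω → Fin d → ℝ) (ω : Ω)
    (hfin : ∀ v, {j | T v j ω ≠ 0}.Finite) (n : ℕ) :
    ∑' v : {l : List ℕ // l.length < n + 1}, wbpWeight T v.1 ω • C v.1 ω
      = (∑' j : ℕ, T ([]) j ω • ∑' w : {l : List ℕ // l.length < n},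
          wbpWeight (fun v k => T (j :: v) k) w.1 ω • C (j :: w.1) ω) + C ([]) ω := by
  classical
  set f : {l : List ℕ // l.length < n + 1} → (Fin d → ℝ) :=
    fun v => wbpWeight T v.1 ω • C v.1 ω with hfdef
  have hSfin : {l : List ℕ | l.length < n + 1 ∧ wbpWeight T l ω ≠ 0}.Finite :=
    wbpWeight_support_finite ω (n + 1) T hfin
  have hfsupp : (Function.support f).Finite := by
    refine (hSfin.preimage (Subtype.val_injective.injOn)).subset ?_
    intro v hv
    refine Set.mem_preimage.2 ⟨v.2, fun h => hv ?_⟩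
    simp [hfdef, h]
  have hsum : Summable f := summable_of_finite_support hfsupp
  have hsumO : Summable (fun o => f ((consEquiv n).symm o)) :=
    ((consEquiv n).symm.summable_iff).2 hsum
  have kEq : ∑' v, f v = ∑' o : Option (ℕ × {l : List ℕ // l.length < n}), f ((consEquiv n).symm o) :=
    ((consEquiv n).symm.tsum_eq f).symm
  rw [kEq, Summable.tsum_eq_add_tsum_ite hsumO none]
  have h0 : f ((consEquiv n).symm none) = C ([]) ω := by
    show wbpWeight T ([]) ω • C ([]) ω = C ([]) ω
    rw [wbpWeight_nil, one_smul]
  rw [h0, add_comm]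
  congr 1
  -- remaining sum
  have h1 : (∑' o : Option (ℕ × {l : List ℕ // l.length < n}),
      (if o = none then 0 else f ((consEquiv n).symm o)))
      = ∑' x : ℕ × {l : List ℕ // l.length < n}, f ((consEquiv n).symm (some x)) := by
    rw [← (Option.some_injective _).tsum_eq
      (f := fun o => if o = none then 0 else f ((consEquiv n).symm o))]
    · simp
    · intro o ho
      rcases o with _ | x
      · simp at ho
      · exact ⟨x, rfl⟩
  rw [h1]
  set G : ℕ × {l : List ℕ // l.length < n} → (Fin d → ℝ) :=
    fun x => T ([]) x.1 ω • (wbpWeight (fun v k => T (x.1 :: v) k) x.2.1 ω • C (x.1 :: x.2.1) ω)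
    with hGdef
  have h2 : ∀ x, f ((consEquiv n).symm (some x)) = G x := by
    rintro ⟨j, w⟩
    show wbpWeight T (j :: w.1) ω • C (j :: w.1) ω = _
    rw [wbpWeight_cons, mul_smul]
  have hGsupp : (Function.support G).Finite := by
    have hinj : Function.Injective (fun x : ℕ × {l : List ℕ // l.length < n} =>
        (consEquiv n).symm (some x)) :=
      (consEquiv n).symm.injective.comp (Option.some_injective _)
    refine (hfsupp.preimage hinj.injOn).subset ?_
    intro x hx
    have : f ((consEquiv n).symm (some x)) ≠ 0 := by rw [h2]; exact hx
    exact this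
  have hGsum : Summable G := summable_of_finite_support hGsupp
  have hGfib : ∀ j : ℕ, Summable fun w : {l : List ℕ // l.length < n} => G (j, w) := by
    intro j
    have hinj : Function.Injective (fun w : {l : List ℕ // l.length < n} => ((j, w) : ℕ × _)) :=
      fun a b h => congrArg Prod.snd h
    exact summable_of_finite_support ((hGsupp.preimage hinj.injOn).subset (fun w hw => hw))
  calc ∑' x : ℕ × {l : List ℕ // l.length < n}, f ((consEquiv n).symm (some x))
      = ∑' x : ℕ × {l : List ℕ // l.length < n}, G x := by exact tsum_congr h2
    _ = ∑' (j : ℕ) (w : {l : List ℕ // l.length < n}), G (j, w) := Summable.tsum_prod' hGsum hGfib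
    _ = ∑' j : ℕ, T ([]) j ω • ∑' w : {l : List ℕ // l.length < n},
          wbpWeight (fun v k => T (j :: v) k) w.1 ω • C (j :: w.1) ω := by
        refine tsum_congr fun j => ?_
        exact tsum_const_smul'' (T ([]) j ω)

/-- If `W*_n = ∑_{|v|<n} L(v)C(v)` converges in probability to `W*`, then almost surely
`W* = ∑_{j=1}^N T_j [W*]_j + C`, where `[W*]_j` is the analogous limit for the weighted
branching process rooted at the `j`-th child of the root; in particular the law of `W*`
is a fixed point of the inhomogeneous smoothing transform. -/
theorem Wstar_fixed_point {Ω : Type*} [MeasurableSpace Ω] (P : Measure Ω)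
    [IsProbabilityMeasure P] (d : ℕ)
    (Tv : List ℕ → ℕ → Ω → ℝ) (Cv : List ℕ → Ω → Fin d → ℝ)
    (hmeasT : ∀ v j, Measurable (Tv v j)) (hmeasC : ∀ v, Measurable (Cv v))
    (hindep : iIndepFun
      (m := fun _ : List ℕ => (inferInstance : MeasurableSpace ((Fin d → ℝ) × (ℕ → ℝ))))
      (fun v ω => (Cv v ω, fun j => Tv v j ω)) P)
    (hident : ∀ v : List ℕ,
      Measure.map (fun ω => (Cv v ω, fun j => Tv v j ω)) P
        = Measure.map (fun ω => (Cv [] ω, fun j => Tv [] j ω)) P)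
    (hN : ∀ᵐ ω ∂P, {j | Tv [] j ω ≠ 0}.Finite)
    (Wstar : Ω → Fin d → ℝ) (Wsub : ℕ → Ω → Fin d → ℝ)
    (hW : TendstoInMeasure P
      (fun n ω => ∑' v : {l : List ℕ // l.length < n}, wbpWeight Tv v.1 ω • Cv v.1 ω)
      atTop Wstar)
    (hWsub : ∀ j : ℕ, TendstoInMeasure P
      (fun n ω => ∑' v : {l : List ℕ // l.length < n},
        wbpWeight (fun w k => Tv (j :: w) k) v.1 ω • Cv (j :: v.1) ω)
      atTop (Wsub j)) :
    ∀ᵐ ω ∂P, Wstar ω = (∑' j : ℕ, Tv [] j ω • Wsub j ω) + Cv [] ω := by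
  classical
  set A : ℕ → Ω → (Fin d → ℝ) := fun n ω =>
    ∑' v : {l : List ℕ // l.length < n}, wbpWeight Tv v.1 ω • Cv v.1 ω with hAdef
  set B : ℕ → ℕ → Ω → (Fin d → ℝ) := fun j n ω =>
    ∑' v : {l : List ℕ // l.length < n},
      wbpWeight (fun w k => Tv (j :: w) k) v.1 ω • Cv (j :: v.1) ω with hBdef
  -- Step 1: a.e., every vertex has finitely many nonzero weights
  have hS_meas : MeasurableSet {g : ℕ → ℝ | {j | g j ≠ 0}.Finite} := by
    have hset : {g : ℕ → ℝ | {j | g j ≠ 0}.Finite}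
        = ⋃ m : ℕ, ⋂ j : ℕ, ⋂ _ : m ≤ j, {g : ℕ → ℝ | g j = 0} := by
      ext g
      simp only [Set.mem_setOf_eq, Set.mem_iUnion, Set.mem_iInter]
      constructor
      · intro hg
        obtain ⟨m, hm⟩ := hg.bddAbove
        refine ⟨m + 1, fun j hj => ?_⟩
        by_contra h
        have hjm : j ≤ m := hm h
        omega
      · rintro ⟨m, hm⟩
        exact (Set.finite_Iio m).subset fun j hj => lt_of_not_ge fun h => hj (hm j h)
    rw [hset]
    refine MeasurableSet.iUnion fun m => MeasurableSet.iInter fun j =>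
      MeasurableSet.iInter fun _ => ?_
    exact (measurable_pi_apply j) (measurableSet_singleton 0)
  have hmeas_pair : ∀ u : List ℕ, Measurable (fun ω => (Cv u ω, fun j => Tv u j ω)) :=
    fun u => (hmeasC u).prodMk (measurable_pi_lambda _ fun j => hmeasT u j)
  have hEmeas : ∀ u : List ℕ, MeasurableSet {ω | {j | Tv u j ω ≠ 0}.Finite} :=
    fun u => (hmeas_pair u) (measurable_snd hS_meas)
  have hfin_ae : ∀ᵐ ω ∂P, ∀ v : List ℕ, {j | Tv v j ω ≠ 0}.Finite := by
    rw [ae_all_iff]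
    intro v
    have hkey : P {ω | {j | Tv v j ω ≠ 0}.Finite} = P {ω | {j | Tv ([]) j ω ≠ 0}.Finite} := by
      have h1 : ∀ u : List ℕ, {ω | {j | Tv u j ω ≠ 0}.Finite}
          = (fun ω => (Cv u ω, fun j => Tv u j ω)) ⁻¹'
            (Prod.snd ⁻¹' {g : ℕ → ℝ | {j | g j ≠ 0}.Finite}) := fun u => rfl
      rw [h1 v, h1 ([]), ← Measure.map_apply (hmeas_pair v) (measurable_snd hS_meas),
        ← Measure.map_apply (hmeas_pair ([])) (measurable_snd hS_meas), hident v]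
    have hroot : P {ω | {j | Tv ([]) j ω ≠ 0}.Finite} = 1 := by
      rw [← prob_compl_eq_zero_iff (hEmeas ([])), Set.compl_setOf]
      exact ae_iff.1 hN
    rw [ae_iff]
    have hcompl : {ω | ¬ {j | Tv v j ω ≠ 0}.Finite} = {ω | {j | Tv v j ω ≠ 0}.Finite}ᶜ := by
      ext ω; simp
    rw [hcompl, prob_compl_eq_zero_iff (hEmeas v), hkey, hroot]
  -- Step 2: subsequence machinery
  have hA1 : TendstoInMeasure P (fun n => A (n + 1)) atTop Wstar :=
    fun ε hε => (hW ε hε).comp (tendsto_add_atTop_nat 1)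
  obtain ⟨g0, hg0mono, hae0⟩ := hA1.exists_seq_tendsto_ae
  have step : ∀ (j : ℕ) (f : ℕ → ℕ), StrictMono f →
      ∃ g : ℕ → ℕ, StrictMono g ∧
        ∀ᵐ ω ∂P, Tendsto (fun k => B j (f (g k)) ω) atTop (nhds (Wsub j ω)) := by
    intro j f hf
    have h1 : TendstoInMeasure P (fun n => B j (f n)) atTop (Wsub j) :=
      fun ε hε => (hWsub j ε hε).comp hf.tendsto_atTop
    obtain ⟨g, hg, hae⟩ := h1.exists_seq_tendsto_ae
    exact ⟨g, hg, hae⟩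
  let Φ : ℕ → {f : ℕ → ℕ // StrictMono f} := fun k =>
    Nat.rec ⟨g0, hg0mono⟩ (fun k ih =>
      ⟨ih.1 ∘ (step k ih.1 ih.2).choose,
        ih.2.comp (step k ih.1 ih.2).choose_spec.1⟩) k
  have hΦae : ∀ k : ℕ, ∀ᵐ ω ∂P,
      Tendsto (fun i => B k ((Φ (k + 1)).1 i) ω) atTop (nhds (Wsub k ω)) :=
    fun k => (step k (Φ k).1 (Φ k).2).choose_spec.2
  have hsub : ∀ j k : ℕ, j ≤ k → ∀ i : ℕ, ∃ m, (Φ k).1 i = (Φ j).1 m ∧ i ≤ m := by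
    intro j k
    induction k with
    | zero =>
      intro h i
      obtain rfl : j = 0 := Nat.le_zero.1 h
      exact ⟨i, rfl, le_rfl⟩
    | succ k ih =>
      intro h i
      rcases h.lt_or_eq with h' | rfl
      · have hjk : j ≤ k := Nat.lt_succ_iff.1 h'
        have hle : i ≤ (step k (Φ k).1 (Φ k).2).choose i :=
          ((step k (Φ k).1 (Φ k).2).choose_spec.1).le_apply
        obtain ⟨m, hm, him⟩ := ih hjk ((step k (Φ k).1 (Φ k).2).choose i)
        exact ⟨m, hm, le_trans hle him⟩
      · exact ⟨i, rfl, le_rfl⟩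
  set D : ℕ → ℕ := fun k => (Φ k).1 k with hDdef
  have key : ∀ j : ℕ, ∃ u : ℕ → ℕ, Tendsto u atTop atTop ∧
      ∀ k, j ≤ k → D k = (Φ j).1 (u k) := by
    intro j
    have hex : ∀ k, ∃ m, (j ≤ k → (Φ k).1 k = (Φ j).1 m) ∧ k ≤ m := by
      intro k
      by_cases h : j ≤ k
      · obtain ⟨m, hm, hkm⟩ := hsub j k h k
        exact ⟨m, fun _ => hm, hkm⟩
      · exact ⟨k, fun h' => absurd h' h, le_rfl⟩
    choose u hu1 hu2 using hex
    exact ⟨u, tendsto_atTop_mono hu2 tendsto_id, fun k hk => hu1 k hk⟩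
  -- Step 3: conclude pointwise a.e.
  filter_upwards [hfin_ae, hae0, ae_all_iff.2 hΦae] with ω hfin hA0 hBj
  have hAD : Tendsto (fun k => A (D k + 1) ω) atTop (nhds (Wstar ω)) := by
    obtain ⟨u, hu, hrep⟩ := key 0
    refine Filter.Tendsto.congr' ?_ (hA0.comp hu)
    filter_upwards [eventually_ge_atTop 0] with k hk
    show A ((Φ 0).1 (u k) + 1) ω = A (D k + 1) ω
    rw [← hrep k hk]
  have hBD : ∀ j : ℕ, Tendsto (fun k => B j (D k) ω) atTop (nhds (Wsub j ω)) := by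
    intro j
    obtain ⟨u, hu, hrep⟩ := key (j + 1)
    refine Filter.Tendsto.congr' ?_ ((hBj j).comp hu)
    filter_upwards [eventually_ge_atTop (j + 1)] with k hk
    show B j ((Φ (j + 1)).1 (u k)) ω = B j (D k) ω
    rw [← hrep k hk]
  have hdec : ∀ n : ℕ, A (n + 1) ω = (∑' j : ℕ, Tv ([]) j ω • B j n ω) + Cv ([]) ω :=
    fun n => wbp_decomp d Tv Cv ω hfin n
  have htsum_eq : ∀ X : ℕ → Fin d → ℝ,
      (∑' j : ℕ, Tv ([]) j ω • X j) = ∑ j ∈ (hfin ([])).toFinset, Tv ([]) j ω • X j := by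
    intro X
    refine tsum_eq_sum fun j hj => ?_
    have : Tv ([]) j ω = 0 := by
      by_contra h
      exact hj ((hfin ([])).mem_toFinset.2 h)
    simp [this]
  have hlim2 : Tendsto (fun k => A (D k + 1) ω) atTop
      (nhds ((∑ j ∈ (hfin ([])).toFinset, Tv ([]) j ω • Wsub j ω) + Cv ([]) ω)) := by
    have heq : ∀ k, A (D k + 1) ω
        = (∑ j ∈ (hfin ([])).toFinset, Tv ([]) j ω • B j (D k) ω) + Cv ([]) ω := by
      intro k
      rw [hdec (D k), htsum_eq]
    refine Tendsto.congr (fun k => (heq k).symm) ?_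
    exact Tendsto.add
      (tendsto_finset_sum _ fun j _ => (hBD j).const_smul _) tendsto_const_nhds
  have hWeq := tendsto_nhds_unique hAD hlim2
  rw [hWeq, htsum_eq fun j => Wsub j ω]
end

section
/- Assume $m(\beta) := \mathbb{E}[\sum_{j\ge1}|T_j|^{\beta}] < 1$ for some $0 < \beta \le 1$ and $\mathbb{E}[|C_j|^{\beta}] < \infty$ for $j = 1,\ldots,d$. Then the series $\sum_{v \in \mathbb{V}} |L(v)|\,|\mathbf{C}(v)|$ converges almost surely; in particular $\mathbf{W}_n^* = \sum_{|v|<n} L(v)\mathbf{C}(v)$ converges almost surely. -/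
open MeasureTheory ProbabilityTheory Filter

lemma aux_lintegral_prod {Ω ι : Type*} [MeasurableSpace Ω] {μ : Measure Ω}
    [IsProbabilityMeasure μ] {g : ι → Ω → ENNReal}
    (h : iIndepFun g μ)
    (hm : ∀ i, Measurable (g i)) (s : Finset ι) :
    ∫⁻ ω, ∏ i ∈ s, g i ω ∂μ = ∏ i ∈ s, ∫⁻ ω, g i ω ∂μ := by
  classical
  induction s using Finset.cons_induction with
  | empty => simp
  | cons a s ha ih =>
    rw [Finset.prod_cons, ← ih]
    have hindep : ProbabilityTheory.IndepFun (g a) (fun ω => ∏ i ∈ s, g i ω) μ := by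
      have := (h.indepFun_finsetProd_of_notMem hm ha).symm
      have he : (∏ j ∈ s, g j) = fun ω => ∏ i ∈ s, g i ω := by
        ext ω; simp [Finset.prod_apply]
      rwa [he] at this
    have := lintegral_mul_eq_lintegral_mul_lintegral_of_indepFun (hm a)
      (s.measurable_prod (fun i _ => hm i)) hindep
    simp only [Finset.prod_cons]
    calc ∫⁻ ω, g a ω * ∏ i ∈ s, g i ω ∂μ
        = ∫⁻ ω, (g a * fun ω => ∏ i ∈ s, g i ω) ω ∂μ := by
          congr 1
      _ = (∫⁻ ω, g a ω ∂μ) * ∫⁻ ω, ∏ i ∈ s, g i ω ∂μ := this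

lemma aux_tsum_pi (a : ℕ → ENNReal) : ∀ n, ∑' t : Fin n → ℕ, ∏ k, a (t k) = (∑' j, a j) ^ n
  | 0 => by
    rw [tsum_eq_single (fun i => i.elim0) (fun b hb => absurd (Subsingleton.elim b _) hb)]
    simp
  | n + 1 => by
    calc ∑' t : Fin (n + 1) → ℕ, ∏ k, a (t k)
        = ∑' p : ℕ × (Fin n → ℕ), ∏ k, a ((Fin.consEquiv fun _ => ℕ) p k) :=
          ((Fin.consEquiv fun _ => ℕ).tsum_eq _).symm
      _ = ∑' p : ℕ × (Fin n → ℕ), a p.1 * ∏ k : Fin n, a (p.2 k) := by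
          congr 1; ext p
          rw [Fin.prod_univ_succ]
          simp [Fin.consEquiv]
      _ = ∑' x : ℕ, ∑' y : Fin n → ℕ, a x * ∏ k : Fin n, a (y k) :=
          ENNReal.tsum_prod (f := fun (x : ℕ) (y : Fin n → ℕ) => a x * ∏ k : Fin n, a (y k))
      _ = (∑' j, a j) * ∑' t : Fin n → ℕ, ∏ k, a (t k) := by
          simp_rw [ENNReal.tsum_mul_left, ENNReal.tsum_mul_right]
      _ = (∑' j, a j) ^ (n + 1) := by rw [aux_tsum_pi a n, pow_succ]; ring

/-- Proposition 2.1(i): if `m(β) = E[∑_j |T_j|^β] < 1` for some `0 < β ≤ 1` and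
`E[|C_i|^β] < ∞` for each coordinate `i`, then `∑_{v} |L(v)||C(v)|` converges a.s.;
in particular `W*_n = ∑_{|v|<n} L(v)C(v)` converges almost surely. -/
theorem Wstar_converges_as {Ω : Type*} [MeasurableSpace Ω] (P : Measure Ω)
    [IsProbabilityMeasure P] (d : ℕ)
    (Tv : List ℕ → ℕ → Ω → ℝ) (Cv : List ℕ → Ω → Fin d → ℝ)
    (hmeasT : ∀ v j, Measurable (Tv v j)) (hmeasC : ∀ v, Measurable (Cv v))
    (hindep : iIndepFun
      (fun v ω => (Cv v ω, fun j => Tv v j ω)) P)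
    (hident : ∀ v : List ℕ,
      Measure.map (fun ω => (Cv v ω, fun j => Tv v j ω)) P
        = Measure.map (fun ω => (Cv [] ω, fun j => Tv [] j ω)) P)
    (hN : ∀ᵐ ω ∂P, {j | Tv [] j ω ≠ 0}.Finite)
    (β : ℝ) (hβ0 : 0 < β) (hβ1 : β ≤ 1)
    (hmβ : ∫⁻ ω, ∑' j, (‖Tv [] j ω‖₊ : ENNReal) ^ β ∂P < 1)
    (hC : ∀ i : Fin d, ∫⁻ ω, (‖Cv [] ω i‖₊ : ENNReal) ^ β ∂P < ⊤) :
    (∀ᵐ ω ∂P, Summable (fun v : List ℕ => |wbpWeight Tv v ω| * ‖Cv v ω‖)) ∧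
    ∃ Wstar : Ω → Fin d → ℝ, ∀ᵐ ω ∂P,
      Tendsto (fun n => ∑' v : {l : List ℕ // l.length < n}, wbpWeight Tv v.1 ω • Cv v.1 ω)
        atTop (nhds (Wstar ω)) := by
  classical
  set X : List ℕ → Ω → (Fin d → ℝ) × (ℕ → ℝ) := fun v ω => (Cv v ω, fun j => Tv v j ω) with hX
  have hmeasX : ∀ v, Measurable (X v) := fun v =>
    Measurable.prod (hmeasC v) (measurable_pi_lambda _ (fun j => hmeasT v j))
  set a : ℕ → ENNReal := fun j => ∫⁻ ω, (‖Tv [] j ω‖₊ : ENNReal) ^ β ∂P with ha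
  set c : ENNReal := ∫⁻ ω, (‖Cv [] ω‖₊ : ENNReal) ^ β ∂P with hc
  set M : ENNReal := ∑' j, a j with hM
  -- identical distribution of coordinates
  have hTid : ∀ u j, ∫⁻ ω, (‖Tv u j ω‖₊ : ENNReal) ^ β ∂P = a j := by
    intro u j
    have hφ : Measurable fun p : (Fin d → ℝ) × (ℕ → ℝ) => (‖p.2 j‖₊ : ENNReal) ^ β :=
      (((measurable_pi_apply j).comp measurable_snd).nnnorm.coe_nnreal_ennreal).pow_const β
    calc ∫⁻ ω, (‖Tv u j ω‖₊ : ENNReal) ^ β ∂P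
        = ∫⁻ p, (‖p.2 j‖₊ : ENNReal) ^ β ∂(P.map (X u)) := (lintegral_map hφ (hmeasX u)).symm
      _ = ∫⁻ p, (‖p.2 j‖₊ : ENNReal) ^ β ∂(P.map (X [])) := by rw [hX]; rw [hident u]
      _ = a j := lintegral_map hφ (hmeasX [])
  have hCid : ∀ u, ∫⁻ ω, (‖Cv u ω‖₊ : ENNReal) ^ β ∂P = c := by
    intro u
    have hφ : Measurable fun p : (Fin d → ℝ) × (ℕ → ℝ) => (‖p.1‖₊ : ENNReal) ^ β :=
      (measurable_fst.nnnorm.coe_nnreal_ennreal).pow_const β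
    calc ∫⁻ ω, (‖Cv u ω‖₊ : ENNReal) ^ β ∂P
        = ∫⁻ p, (‖p.1‖₊ : ENNReal) ^ β ∂(P.map (X u)) := (lintegral_map hφ (hmeasX u)).symm
      _ = ∫⁻ p, (‖p.1‖₊ : ENNReal) ^ β ∂(P.map (X [])) := by rw [hX]; rw [hident u]
      _ = c := lintegral_map hφ (hmeasX [])
  -- the nonnegative summands
  set w : List ℕ → Ω → ENNReal := fun v ω =>
    (∏ k ∈ Finset.range v.length, (‖Tv (v.take k) (v.getD k 0) ω‖₊ : ENNReal) ^ β) *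
      (‖Cv v ω‖₊ : ENNReal) ^ β with hw
  have hmeasw : ∀ v, Measurable (w v) := by
    intro v
    exact (Finset.measurable_prod _ fun k _ =>
        ((hmeasT _ _).nnnorm.coe_nnreal_ennreal).pow_const β).mul
      ((hmeasC v).nnnorm.coe_nnreal_ennreal.pow_const β)
  -- Step A : per-vertex integral
  have hIv : ∀ v : List ℕ,
      ∫⁻ ω, w v ω ∂P = (∏ k ∈ Finset.range v.length, a (v.getD k 0)) * c := by
    intro v
    set n := v.length with hn
    set φ : List ℕ → (Fin d → ℝ) × (ℕ → ℝ) → ENNReal := fun u p =>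
      (if u = v then (‖p.1‖₊ : ENNReal) ^ β else 1) *
        (if u.length < v.length ∧ u = v.take u.length
          then (‖p.2 (v.getD u.length 0)‖₊ : ENNReal) ^ β else 1) with hφdef
    have hφ : ∀ u, Measurable (φ u) := by
      intro u
      apply Measurable.mul
      · split_ifs
        · exact (measurable_fst.nnnorm.coe_nnreal_ennreal).pow_const β
        · exact measurable_const
      · split_ifs
        · exact (((measurable_pi_apply _).comp measurable_snd).nnnorm.coe_nnreal_ennreal).pow_const β
        · exact measurable_const
    set g : List ℕ → Ω → ENNReal := fun u => φ u ∘ X u with hg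
    have hgindep : iIndepFun g P := hindep.comp φ hφ
    have hgmeas : ∀ u, Measurable (g u) := fun u => (hφ u).comp (hmeasX u)
    have hlen : ∀ k ≤ n, (v.take k).length = k := by
      intro k hk; simp [List.length_take, hn.symm ▸ hk, Nat.min_eq_left hk]
    have hg_lt : ∀ k < n, g (v.take k) = fun ω => (‖Tv (v.take k) (v.getD k 0) ω‖₊ : ENNReal) ^ β := by
      intro k hk
      ext ω
      have h1 : v.take k ≠ v := by
        intro h; have := congrArg List.length h
        rw [hlen k hk.le] at this; omega
      have h2 : (v.take k).length < v.length ∧ v.take k = v.take (v.take k).length := by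
        constructor
        · rw [hlen k hk.le]; exact hk
        · rw [hlen k hk.le]
      simp only [hg, hφdef, Function.comp_apply, if_neg h1, if_pos h2, one_mul, hX]
      rw [hlen k hk.le]
    have hg_n : g v = fun ω => (‖Cv v ω‖₊ : ENNReal) ^ β := by
      ext ω
      have h2 : ¬(v.length < v.length ∧ v = v.take v.length) := by
        intro h; exact absurd h.1 (lt_irrefl _)
      simp only [hg, hφdef, Function.comp_apply, if_neg h2, mul_one, hX]
      simp
    have hinj : Set.InjOn (fun k => v.take k) ↑(Finset.range (n + 1)) := by
      intro k1 h1 k2 h2 h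
      simp only [Finset.coe_range, Set.mem_Iio] at h1 h2
      have := congrArg List.length h
      rwa [hlen k1 (by omega), hlen k2 (by omega)] at this
    have hwprod : ∀ ω, w v ω = ∏ k ∈ Finset.range (n + 1), g (v.take k) ω := by
      intro ω
      rw [Finset.prod_range_succ, List.take_length, hg_n]
      show (∏ k ∈ Finset.range v.length,
          (‖Tv (v.take k) (v.getD k 0) ω‖₊ : ENNReal) ^ β) * (‖Cv v ω‖₊ : ENNReal) ^ β = _
      congr 1
      apply Finset.prod_congr rfl
      intro k hk
      rw [hg_lt k (Finset.mem_range.mp hk)]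
    have himage : ∫⁻ ω, w v ω ∂P = ∏ k ∈ Finset.range (n + 1), ∫⁻ ω, g (v.take k) ω ∂P := by
      calc ∫⁻ ω, w v ω ∂P
          = ∫⁻ ω, ∏ u ∈ (Finset.range (n + 1)).image (fun k => v.take k), g u ω ∂P := by
            congr 1; ext ω
            rw [Finset.prod_image (fun k hk l hl h => hinj (by simpa using hk) (by simpa using hl) h)]
            exact hwprod ω
        _ = ∏ u ∈ (Finset.range (n + 1)).image (fun k => v.take k), ∫⁻ ω, g u ω ∂P :=
            aux_lintegral_prod hgindep hgmeas _
        _ = ∏ k ∈ Finset.range (n + 1), ∫⁻ ω, g (v.take k) ω ∂P :=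
            Finset.prod_image (fun k hk l hl h => hinj (by simpa using hk) (by simpa using hl) h)
    rw [himage, Finset.prod_range_succ, List.take_length, hg_n]
    have : ∀ k ∈ Finset.range n, ∫⁻ ω, g (v.take k) ω ∂P = a (v.getD k 0) := by
      intro k hk
      rw [hg_lt k (Finset.mem_range.mp hk)]
      exact hTid _ _
    rw [Finset.prod_congr rfl this, hCid v]
  -- Step D : M < 1
  have hM1 : M < 1 := by
    have : ∫⁻ ω, ∑' j, (‖Tv [] j ω‖₊ : ENNReal) ^ β ∂P = M := by
      rw [lintegral_tsum (fun j =>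
        (((hmeasT [] j).nnnorm.coe_nnreal_ennreal).pow_const β).aemeasurable)]
    rwa [this] at hmβ
  -- Step E : c < ⊤
  have hcfin : c < ⊤ := by
    have hle : ∀ ω, (‖Cv [] ω‖₊ : ENNReal) ^ β ≤ ∑ i : Fin d, (‖Cv [] ω i‖₊ : ENNReal) ^ β := by
      intro ω
      rcases Finset.eq_empty_or_nonempty (Finset.univ : Finset (Fin d)) with he | hne
      · have : ‖Cv [] ω‖₊ = 0 := by
          rw [Pi.nnnorm_def, he]; rfl
        rw [this]
        simp [ENNReal.zero_rpow_of_pos hβ0]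
      · obtain ⟨i, _, hi⟩ := Finset.exists_mem_eq_sup Finset.univ hne fun i => ‖Cv [] ω i‖₊
        rw [Pi.nnnorm_def, hi]
        exact Finset.single_le_sum (f := fun i => (‖Cv [] ω i‖₊ : ENNReal) ^ β)
          (fun i _ => zero_le) (Finset.mem_univ i)
    calc c ≤ ∫⁻ ω, ∑ i : Fin d, (‖Cv [] ω i‖₊ : ENNReal) ^ β ∂P := lintegral_mono hle
      _ = ∑ i : Fin d, ∫⁻ ω, (‖Cv [] ω i‖₊ : ENNReal) ^ β ∂P :=
          lintegral_finset_sum _ (fun i _ =>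
            (((hmeasC []).eval.nnnorm.coe_nnreal_ennreal).pow_const β))
      _ < ⊤ := ENNReal.sum_lt_top.mpr (fun i _ => hC i)
  -- Step C : the combinatorial sum over all lists
  have hlist : ∑' v : List ℕ, ∏ k ∈ Finset.range v.length, a (v.getD k 0) = ∑' n : ℕ, M ^ n := by
    calc ∑' v : List ℕ, ∏ k ∈ Finset.range v.length, a (v.getD k 0)
        = ∑' x : Σ n : ℕ, Fin n → ℕ, ∏ k ∈ Finset.range (List.ofFn x.2).length,
            a ((List.ofFn x.2).getD k 0) :=
          (List.equivSigmaTuple.symm.tsum_eq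
            (fun v => ∏ k ∈ Finset.range v.length, a (v.getD k 0))).symm
      _ = ∑' n : ℕ, ∑' t : Fin n → ℕ, ∏ k ∈ Finset.range (List.ofFn t).length,
            a ((List.ofFn t).getD k 0) := ENNReal.tsum_sigma' _
      _ = ∑' n : ℕ, ∑' t : Fin n → ℕ, ∏ k, a (t k) := by
          refine tsum_congr fun n => tsum_congr fun t => ?_
          rw [List.length_ofFn,
            ← Fin.prod_univ_eq_prod_range (fun k => a ((List.ofFn t).getD k 0)) n]
          apply Finset.prod_congr rfl
          intro i _
          rw [List.getD_eq_getElem _ _ (by simp [i.isLt]), List.getElem_ofFn]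
      _ = ∑' n : ℕ, M ^ n := tsum_congr fun n => aux_tsum_pi a n
  -- Step F : finite integral
  have htot : ∫⁻ ω, ∑' v : List ℕ, w v ω ∂P < ⊤ := by
    rw [lintegral_tsum (fun v => (hmeasw v).aemeasurable)]
    have : ∑' v : List ℕ, ∫⁻ ω, w v ω ∂P
        = (∑' v : List ℕ, ∏ k ∈ Finset.range v.length, a (v.getD k 0)) * c := by
      rw [← ENNReal.tsum_mul_right]
      congr 1; ext v; exact hIv v
    rw [this, hlist, ENNReal.tsum_geometric]
    exact ENNReal.mul_lt_top
      (ENNReal.inv_lt_top.mpr (tsub_pos_iff_lt.mpr hM1)) hcfin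
  -- Step G : a.e. finiteness
  have hae : ∀ᵐ ω ∂P, ∑' v : List ℕ, w v ω < ⊤ :=
    ae_lt_top (Measurable.ennreal_tsum hmeasw) htot.ne
  -- rewrite w as (y v)^β
  have hwy : ∀ ω (v : List ℕ), w v ω
      = ((‖wbpWeight Tv v ω‖₊ * ‖Cv v ω‖₊ : NNReal) : ENNReal) ^ β := by
    intro ω v
    rw [ENNReal.coe_mul, ENNReal.mul_rpow_of_nonneg _ _ hβ0.le]
    congr 1
    rw [wbpWeight, nnnorm_prod, ENNReal.coe_finset_prod,
      ← ENNReal.prod_rpow_of_nonneg hβ0.le]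
  -- Part 1
  have part1 : ∀ᵐ ω ∂P, Summable (fun v : List ℕ => |wbpWeight Tv v ω| * ‖Cv v ω‖) := by
    filter_upwards [hae] with ω hω
    set y : List ℕ → NNReal := fun v => ‖wbpWeight Tv v ω‖₊ * ‖Cv v ω‖₊ with hy
    have hωy : ∑' v : List ℕ, ((y v : ENNReal)) ^ β < ⊤ := by
      have : (fun v : List ℕ => ((y v : ENNReal)) ^ β) = fun v => w v ω := by
        ext v; rw [hwy ω v]
      rw [this]; exact hω
    -- the set of large values is finite
    have hSfin : {v : List ℕ | 1 ≤ (y v : ENNReal)}.Finite := by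
      by_contra h
      have hinf : Infinite {v : List ℕ | 1 ≤ (y v : ENNReal)} :=
        Set.infinite_coe_iff.mpr h
      have h1 : (⊤ : ENNReal) = ∑' _ : {v : List ℕ | 1 ≤ (y v : ENNReal)}, (1 : ENNReal) :=
        (ENNReal.tsum_const_eq_top_of_ne_zero one_ne_zero).symm
      have h2 : ∑' v : {v : List ℕ | 1 ≤ (y v : ENNReal)}, (1 : ENNReal)
          ≤ ∑' v : {v : List ℕ | 1 ≤ (y v : ENNReal)}, ((y v.1 : ENNReal)) ^ β := by
        apply ENNReal.tsum_le_tsum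
        intro v
        calc (1 : ENNReal) = 1 ^ β := (ENNReal.one_rpow β).symm
          _ ≤ ((y v.1 : ENNReal)) ^ β := ENNReal.rpow_le_rpow v.2 hβ0.le
      have h3 : ∑' v : {v : List ℕ | 1 ≤ (y v : ENNReal)}, ((y v.1 : ENNReal)) ^ β
          ≤ ∑' v : List ℕ, ((y v : ENNReal)) ^ β :=
        ENNReal.tsum_comp_le_tsum_of_injective Subtype.val_injective _
      exact absurd (h1 ▸ (h2.trans h3)) (by simpa using hωy.ne)
    have hfin2 : ∑' v : List ℕ, (y v : ENNReal) < ⊤ := by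
      have hpt : ∀ v : List ℕ, (y v : ENNReal)
          ≤ {v : List ℕ | 1 ≤ (y v : ENNReal)}.indicator (fun v => (y v : ENNReal)) v
            + ((y v : ENNReal)) ^ β := by
        intro v
        by_cases h1 : 1 ≤ (y v : ENNReal)
        · rw [Set.indicator_of_mem (show v ∈ {v : List ℕ | 1 ≤ (y v : ENNReal)} from h1)]
          exact le_add_right le_rfl
        · push_neg at h1
          rw [Set.indicator_of_notMem
            (show v ∉ {v : List ℕ | 1 ≤ (y v : ENNReal)} from h1.not_ge)]
          calc (y v : ENNReal) = ((y v : ENNReal)) ^ (1 : ℝ) := (ENNReal.rpow_one _).symm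
            _ ≤ ((y v : ENNReal)) ^ β := ENNReal.rpow_le_rpow_of_exponent_ge h1.le hβ1
            _ ≤ 0 + ((y v : ENNReal)) ^ β := (zero_add _).symm.le
      calc ∑' v : List ℕ, (y v : ENNReal)
          ≤ ∑' v : List ℕ, ({v : List ℕ | 1 ≤ (y v : ENNReal)}.indicator
              (fun v => (y v : ENNReal)) v + ((y v : ENNReal)) ^ β) := ENNReal.tsum_le_tsum hpt
        _ = (∑' v : List ℕ, {v : List ℕ | 1 ≤ (y v : ENNReal)}.indicator
              (fun v => (y v : ENNReal)) v) + ∑' v : List ℕ, ((y v : ENNReal)) ^ β :=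
            ENNReal.tsum_add
        _ < ⊤ := by
            apply ENNReal.add_lt_top.mpr
            constructor
            · rw [tsum_eq_sum (s := hSfin.toFinset)
                (fun v hv => Set.indicator_of_notMem (by simpa using hv) _)]
              exact ENNReal.sum_lt_top.mpr (fun v _ => by
                by_cases h : v ∈ {v : List ℕ | 1 ≤ (y v : ENNReal)}
                · rw [Set.indicator_of_mem h]; exact ENNReal.coe_lt_top
                · rw [Set.indicator_of_notMem h]; exact ENNReal.zero_lt_top)
            · exact hωy
    have hys : Summable y := ENNReal.tsum_coe_ne_top_iff_summable.mp hfin2.ne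
    have : Summable (fun v : List ℕ => ((y v : ℝ))) := NNReal.summable_coe.mpr hys
    apply this.congr
    intro v
    simp [hy, NNReal.coe_mul, coe_nnnorm, Real.norm_eq_abs]
  refine ⟨part1, ⟨fun ω => ∑' v : List ℕ, wbpWeight Tv v ω • Cv v ω, ?_⟩⟩
  filter_upwards [part1] with ω hsum
  have hnorm : ∀ v : List ℕ, ‖wbpWeight Tv v ω • Cv v ω‖ = |wbpWeight Tv v ω| * ‖Cv v ω‖ := by
    intro v; rw [norm_smul, Real.norm_eq_abs]
  have hf : Summable (fun v : List ℕ => wbpWeight Tv v ω • Cv v ω) := by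
    apply Summable.of_norm
    apply hsum.congr
    intro v; exact (hnorm v).symm
  have hten := tendsto_tsum_of_dominated_convergence
    (𝓕 := (atTop : Filter ℕ))
    (f := fun (n : ℕ) (v : List ℕ) =>
      Set.indicator {l : List ℕ | l.length < n} (fun v => wbpWeight Tv v ω • Cv v ω) v)
    (g := fun v : List ℕ => wbpWeight Tv v ω • Cv v ω)
    (bound := fun v : List ℕ => |wbpWeight Tv v ω| * ‖Cv v ω‖) hsum
    (fun v => by
      apply Tendsto.congr' _ (tendsto_const_nhds (x := wbpWeight Tv v ω • Cv v ω))
      filter_upwards [eventually_ge_atTop (List.length v + 1)] with n hn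
      exact (Set.indicator_of_mem (show v ∈ {l : List ℕ | l.length < n} by simp; omega)
        (fun v => wbpWeight Tv v ω • Cv v ω)).symm)
    (Eventually.of_forall (fun n => fun v => by
      calc ‖Set.indicator {l : List ℕ | l.length < n}
            (fun v => wbpWeight Tv v ω • Cv v ω) v‖
          ≤ ‖wbpWeight Tv v ω • Cv v ω‖ := norm_indicator_le_norm_self _ _
        _ = |wbpWeight Tv v ω| * ‖Cv v ω‖ := hnorm v))
  have hEq : (fun n : ℕ => ∑' v : {l : List ℕ // l.length < n}, wbpWeight Tv v.1 ω • Cv v.1 ω)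
      = fun n : ℕ => ∑' v : List ℕ,
          Set.indicator {l : List ℕ | l.length < n} (fun v => wbpWeight Tv v ω • Cv v ω) v := by
    funext n
    exact tsum_subtype {l : List ℕ | l.length < n} (fun v => wbpWeight Tv v ω • Cv v ω)
  rw [hEq]
  exact hten
end
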